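/- In the energy-decomposition compression setting, for each i and each k ≥ 0, every minimizer ψ_i^k of ‖x‖_A over vectors x ∈ ℝⁿ supported in S_k(P_{j_i}) subject to Φᵀx = e_i satisfies ‖ψ_i‖_A ≤ ‖ψ_i^k‖_A ≤ ‖ψ_i^0‖_A ≤ √(δ(P_{j_i})), where ψ_i is the i-th column of Ψ = A⁻¹Φ(ΦᵀA⁻¹Φ)⁻¹. -/

import Mathlib

open Matrix BigOperators
open scoped Classical

noncomputable section

/-- The 0/1 diagonal projection matrix onto the coordinates in `S`. -/
def projSet {n : ℕ} (S : Finset (Fin n)) : Matrix (Fin n) (Fin n) ℝ :=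
  Matrix.diagonal (fun i => if i ∈ S then (1:ℝ) else 0)

/-- The diagonal concentration `E^d` of `E`: diagonal with entries `∑_j |E_{ij}|`. -/
def diagConc {n : ℕ} (E : Matrix (Fin n) (Fin n) ℝ) : Matrix (Fin n) (Fin n) ℝ :=
  Matrix.diagonal (fun i => ∑ j, |E i j|)

/-- `E` is interior to `S` if `P_S E P_S = E`. -/
def InteriorTo {n : ℕ} (E : Matrix (Fin n) (Fin n) ℝ) (S : Finset (Fin n)) : Prop :=
  projSet S * E * projSet S = E

/-- The interior energy `underline(A)_S = ∑_{E_k interior to S} E_k`. -/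
def interiorEnergy {n m : ℕ} (E : Fin m → Matrix (Fin n) (Fin n) ℝ) (S : Finset (Fin n)) :
    Matrix (Fin n) (Fin n) ℝ :=
  ∑ k, if InteriorTo (E k) S then E k else 0

/-- The closed energy
`overline(A)_S = underline(A)_S + ∑_{E_k not interior to S} P_S E_k^d P_S`. -/
def closedEnergy {n m : ℕ} (E : Fin m → Matrix (Fin n) (Fin n) ℝ) (S : Finset (Fin n)) :
    Matrix (Fin n) (Fin n) ℝ :=
  interiorEnergy E S +
    ∑ k, if InteriorTo (E k) S then 0 else projSet S * diagConc (E k) * projSet S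

/-- A partition of `{1,…,n}` into pairwise disjoint nonempty subsets covering everything. -/
def IsPartition {n M : ℕ} (P : Fin M → Finset (Fin n)) : Prop :=
  (∀ j, (P j).Nonempty) ∧ (∀ j j', j ≠ j' → Disjoint (P j) (P j')) ∧
    Finset.univ.biUnion P = Finset.univ

/-- Euclidean norm of a vector. -/
def norm2 {ι : Type} [Fintype ι] (x : ι → ℝ) : ℝ := Real.sqrt (x ⬝ᵥ x)

/-- `A`-energy norm of a vector: `‖x‖_A = √(xᵀ A x)`. -/
def normA {ι : Type} [Fintype ι] (A : Matrix ι ι ℝ) (x : ι → ℝ) : ℝ :=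
  Real.sqrt (x ⬝ᵥ A.mulVec x)

/-- Spectral (ℓ²-operator) norm of a square real matrix. -/
def specNorm {ι : Type} [Fintype ι] [DecidableEq ι] (B : Matrix ι ι ℝ) : ℝ :=
  ‖Matrix.toEuclideanCLM (𝕜 := ℝ) B‖

/-- Smallest value of the Rayleigh quotient; for a symmetric matrix this is the
smallest eigenvalue. -/
def lamMin {ι : Type} [Fintype ι] (B : Matrix ι ι ℝ) : ℝ :=
  sInf {r : ℝ | ∃ x : ι → ℝ, x ⬝ᵥ x = 1 ∧ r = x ⬝ᵥ B.mulVec x}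

/-- Largest value of the Rayleigh quotient; for a symmetric matrix this is the
largest eigenvalue. -/
def lamMax {ι : Type} [Fintype ι] (B : Matrix ι ι ℝ) : ℝ :=
  sSup {r : ℝ | ∃ x : ι → ℝ, x ⬝ᵥ x = 1 ∧ r = x ⬝ᵥ B.mulVec x}

/-- Patch layers: `S_0(P_j) = P_j` and `S_{k+1}(P_j)` adds all patches `P_{j'}` such that
some energy element has a nonzero row indexed in `P_{j'}` and a nonzero row indexed in
`S_k(P_j)`. -/
def layer {n m M : ℕ} (E : Fin m → Matrix (Fin n) (Fin n) ℝ) (P : Fin M → Finset (Fin n))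
    (j : Fin M) : ℕ → Finset (Fin n)
  | 0 => P j
  | (k+1) => layer E P j k ∪ Finset.univ.biUnion (fun j' =>
      if (∃ l, (∃ r ∈ P j', (E l) r ≠ 0) ∧ (∃ r ∈ layer E P j k, (E l) r ≠ 0))
      then P j' else ∅)

/-- Condition factor `δ(P_j) = ‖(Φ̂_jᵀ (overline(A)_{P_j}|_{P_j})⁻¹ Φ̂_j)⁻¹‖₂`, where
`Φ̂_j` is the submatrix of `Φ_j` on the rows in `P_j` and `overline(A)_{P_j}|_{P_j}` is the
submatrix of the closed energy on the rows and columns in `P_j`. -/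
def condFactor {n m : ℕ} (E : Fin m → Matrix (Fin n) (Fin n) ℝ) (S : Finset (Fin n))
    {qj : ℕ} (Φj : Matrix (Fin n) (Fin qj) ℝ) : ℝ :=
  specNorm ((((Φj.submatrix (Subtype.val : {i // i ∈ S} → Fin n) id))ᵀ *
      ((closedEnergy E S).submatrix (Subtype.val : {i // i ∈ S} → Fin n) Subtype.val)⁻¹ *
      (Φj.submatrix (Subtype.val : {i // i ∈ S} → Fin n) id))⁻¹)

/-- The combined matrix `Φ = [Φ_1 ⋯ Φ_M]`, with columns indexed by pairs `⟨j, c⟩`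
(column `c` of the block `Φ_j`). -/
def bigPhi {n M : ℕ} (q : Fin M → ℕ) (Φ : (j : Fin M) → Matrix (Fin n) (Fin (q j)) ℝ) :
    Matrix (Fin n) ((j : Fin M) × Fin (q j)) ℝ :=
  fun r c => Φ c.1 r c.2

/-- `ψ` is a minimizer of `‖x‖_A` over vectors supported in `S` subject to `Φᵀ x = e_i`. -/
def IsMinimizerOn {n : ℕ} {ι : Type} [Fintype ι] [DecidableEq ι]
    (A : Matrix (Fin n) (Fin n) ℝ) (Φ : Matrix (Fin n) ι ℝ) (S : Finset (Fin n)) (i : ι)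
    (ψ : Fin n → ℝ) : Prop :=
  (∀ r, r ∉ S → ψ r = 0) ∧ Φᵀ.mulVec ψ = Pi.single i 1 ∧
    ∀ x : Fin n → ℝ, (∀ r, r ∉ S → x r = 0) → Φᵀ.mulVec x = Pi.single i 1 →
      ψ ⬝ᵥ A.mulVec ψ ≤ x ⬝ᵥ A.mulVec x

/-- `α(P_j)`: the largest value of `(xᵀ overline(A)_{P_j} x)/(xᵀ underline(A)_{P_j} x)`
over nonzero `x` in the column span of `U_j`. -/
def alphaFactor {n m : ℕ} (E : Fin m → Matrix (Fin n) (Fin n) ℝ) (S : Finset (Fin n))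
    {uj : ℕ} (Uj : Matrix (Fin n) (Fin uj) ℝ) : ℝ :=
  sSup {r : ℝ | ∃ x ∈ Submodule.span ℝ (Set.range Ujᵀ), x ≠ 0 ∧
    r = (x ⬝ᵥ (closedEnergy E S).mulVec x) / (x ⬝ᵥ (interiorEnergy E S).mulVec x)}

section Aux

open Matrix
open scoped RealInnerProductSpace

private lemma real_conjT {a b : Type*} (X : Matrix a b ℝ) : Xᴴ = Xᵀ := by
  ext i j; simp [Matrix.conjTranspose_apply]

private lemma sum_support_subtype {n : ℕ} (S : Finset (Fin n)) (f : Fin n → ℝ)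
    (hf : ∀ r ∉ S, f r = 0) : ∑ r : {i // i ∈ S}, f r.1 = ∑ r, f r := by
  rw [Finset.sum_coe_sort S f]
  exact Finset.sum_subset (Finset.subset_univ S) (fun x _ hx => hf x hx)

private lemma dot_symm {ι : Type*} [Fintype ι] (A : Matrix ι ι ℝ) (hA : Aᵀ = A)
    (u v : ι → ℝ) : u ⬝ᵥ A.mulVec v = v ⬝ᵥ A.mulVec u := by
  rw [dotProduct_mulVec, ← mulVec_transpose, hA, dotProduct_comm]

private lemma col_mul {a b c : Type*} [Fintype b] (M : Matrix a b ℝ) (N : Matrix b c ℝ)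
    (i : c) : (fun r => (M * N) r i) = M.mulVec (fun s => N s i) := by
  funext r; simp [Matrix.mul_apply, Matrix.mulVec, dotProduct]

private lemma dot_conj {a b : Type*} [Fintype a] [Fintype b] (K : Matrix a b ℝ)
    (Mmat : Matrix a a ℝ) (v : b → ℝ) :
    (K *ᵥ v) ⬝ᵥ (Mmat *ᵥ (K *ᵥ v)) = v ⬝ᵥ ((Kᵀ * Mmat * K) *ᵥ v) := by
  rw [mulVec_mulVec, ← vecMul_transpose, ← dotProduct_mulVec, mulVec_mulVec,
    ← Matrix.mul_assoc]

private lemma inj_of_orth {a b : Type*} [Fintype a] [Fintype b] [DecidableEq b]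
    (K : Matrix a b ℝ) (h : Kᵀ * K = 1) (v : b → ℝ) (hv : K.mulVec v = 0) : v = 0 := by
  have key : (K *ᵥ v) ⬝ᵥ (1 *ᵥ (K *ᵥ v)) = v ⬝ᵥ v := by
    rw [dot_conj, Matrix.mul_one, h, one_mulVec]
  rw [hv, one_mulVec, zero_dotProduct] at key
  exact dotProduct_self_eq_zero.mp key.symm

private lemma posDef_conj {a b : Type*} [Fintype a] [Fintype b] [DecidableEq a]
    [DecidableEq b] (Mmat : Matrix a a ℝ) (hM : Mmat.PosDef) (K : Matrix a b ℝ)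
    (hK : ∀ v : b → ℝ, K.mulVec v = 0 → v = 0) : (Kᵀ * Mmat * K).PosDef := by
  refine Matrix.PosDef.of_dotProduct_mulVec_pos ?_ ?_
  · have hMt : Mmatᵀ = Mmat := (real_conjT Mmat).symm.trans hM.1
    show (Kᵀ * Mmat * K)ᴴ = _
    rw [real_conjT, transpose_mul, transpose_mul, transpose_transpose, hMt,
      Matrix.mul_assoc]
  · intro v hv
    have hKv : K.mulVec v ≠ 0 := fun h => hv (hK v h)
    have h2 := hM.dotProduct_mulVec_pos hKv
    simp only [star_trivial] at h2 ⊢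
    rwa [dot_conj] at h2

private lemma dot_sum_mulVec {n : ℕ} {κ : Type*} [Fintype κ]
    (f : κ → Matrix (Fin n) (Fin n) ℝ) (x : Fin n → ℝ) :
    x ⬝ᵥ (∑ k, f k) *ᵥ x = ∑ k, x ⬝ᵥ (f k) *ᵥ x := by
  have key : ∀ (Mt : Matrix (Fin n) (Fin n) ℝ),
      x ⬝ᵥ Mt *ᵥ x = ∑ r, ∑ j, x r * (Mt r j * x j) := by
    intro Mt
    apply Finset.sum_congr rfl; intro r _
    show x r * ∑ j, Mt r j * x j = _
    rw [Finset.mul_sum]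
  rw [key, show (∑ k, x ⬝ᵥ (f k) *ᵥ x) = ∑ k, ∑ r, ∑ j, x r * (f k r j * x j) from
    Finset.sum_congr rfl (fun k _ => key (f k))]
  simp_rw [Matrix.sum_apply, Finset.sum_mul, Finset.mul_sum]
  have swap1 : ∀ r : Fin n, ∑ j : Fin n, ∑ k, x r * (f k r j * x j)
      = ∑ k, ∑ j : Fin n, x r * (f k r j * x j) := fun r => Finset.sum_comm
  simp_rw [swap1]
  exact Finset.sum_comm

private lemma quadform_le_diagConc {n : ℕ} (E : Matrix (Fin n) (Fin n) ℝ) (hE : Eᵀ = E)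
    (y : Fin n → ℝ) : y ⬝ᵥ E.mulVec y ≤ y ⬝ᵥ (diagConc E).mulVec y := by
  have hsymm : ∀ i j, E j i = E i j := fun i j => by
    rw [show E j i = Eᵀ i j from rfl, hE]
  have h1 : y ⬝ᵥ E.mulVec y = ∑ i, ∑ j, y i * (E i j * y j) := by
    simp [dotProduct, Matrix.mulVec, Finset.mul_sum]
  have h2 : y ⬝ᵥ (diagConc E).mulVec y = ∑ i, ∑ j, |E i j| * y i ^ 2 := by
    simp only [dotProduct, diagConc, mulVec_diagonal]
    apply Finset.sum_congr rfl; intro i _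
    rw [Finset.sum_mul, Finset.mul_sum]
    apply Finset.sum_congr rfl; intro j _
    ring
  rw [h1, h2]
  have step : ∑ i, ∑ j, y i * (E i j * y j) ≤
      ∑ i, ∑ j, |E i j| * ((y i ^ 2 + y j ^ 2) / 2) := by
    apply Finset.sum_le_sum; intro i _
    apply Finset.sum_le_sum; intro j _
    have h3 : E i j ≤ |E i j| := le_abs_self _
    have h4 : -|E i j| ≤ E i j := neg_abs_le _
    nlinarith [sq_nonneg (y i + y j), sq_nonneg (y i - y j), abs_nonneg (E i j)]
  refine step.trans (le_of_eq ?_)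
  have hswap : ∑ i, ∑ j, |E i j| * y j ^ 2 = ∑ i, ∑ j, |E i j| * y i ^ 2 := by
    rw [Finset.sum_comm]
    apply Finset.sum_congr rfl; intro i _
    apply Finset.sum_congr rfl; intro j _
    rw [hsymm i j]
  calc ∑ i, ∑ j, |E i j| * ((y i ^ 2 + y j ^ 2) / 2)
      = (∑ i, ∑ j, |E i j| * y i ^ 2) / 2 + (∑ i, ∑ j, |E i j| * y j ^ 2) / 2 := by
        rw [Finset.sum_div, Finset.sum_div, ← Finset.sum_add_distrib]
        apply Finset.sum_congr rfl; intro i _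
        rw [Finset.sum_div, Finset.sum_div, ← Finset.sum_add_distrib]
        apply Finset.sum_congr rfl; intro j _
        ring
    _ = ∑ i, ∑ j, |E i j| * y i ^ 2 := by rw [hswap]; ring

private lemma projSet_mulVec_eq {n : ℕ} (S : Finset (Fin n)) (x : Fin n → ℝ)
    (hx : ∀ r ∉ S, x r = 0) : (projSet S).mulVec x = x := by
  funext r
  rw [projSet, mulVec_diagonal]
  by_cases h : r ∈ S
  · simp [h]
  · simp [h, hx r h]

private lemma dot_projSet_sandwich {n : ℕ} (S : Finset (Fin n))
    (D : Matrix (Fin n) (Fin n) ℝ) (x : Fin n → ℝ) (hx : ∀ r ∉ S, x r = 0) :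
    x ⬝ᵥ (projSet S * D * projSet S).mulVec x = x ⬝ᵥ D.mulVec x := by
  have hleft : ∀ z : Fin n → ℝ, x ⬝ᵥ (projSet S).mulVec z = x ⬝ᵥ z := by
    intro z
    apply Finset.sum_congr rfl; intro r _
    rw [projSet, mulVec_diagonal]
    by_cases h : r ∈ S
    · simp [h]
    · simp [h, hx r h]
  rw [← mulVec_mulVec, projSet_mulVec_eq S x hx, ← mulVec_mulVec, hleft]

private lemma quadform_le_closedEnergy {n m : ℕ}
    (E : Fin m → Matrix (Fin n) (Fin n) ℝ) (hE : ∀ k, (E k).PosSemidef)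
    (S : Finset (Fin n)) (x : Fin n → ℝ) (hx : ∀ r ∉ S, x r = 0) :
    x ⬝ᵥ (∑ k, E k) *ᵥ x ≤ x ⬝ᵥ (closedEnergy E S) *ᵥ x := by
  have hsplit : closedEnergy E S = ∑ k, (if InteriorTo (E k) S then E k
      else projSet S * diagConc (E k) * projSet S) := by
    rw [closedEnergy, interiorEnergy, ← Finset.sum_add_distrib]
    apply Finset.sum_congr rfl; intro k _
    by_cases h : InteriorTo (E k) S <;> simp [h]
  rw [hsplit, dot_sum_mulVec, dot_sum_mulVec]
  apply Finset.sum_le_sum; intro k _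
  by_cases h : InteriorTo (E k) S
  · rw [if_pos h]
  · rw [if_neg h, dot_projSet_sandwich S _ x hx]
    have hsym : (E k)ᵀ = E k := by rw [← real_conjT]; exact (hE k).1
    exact quadform_le_diagConc (E k) hsym x

private lemma quadform_submatrix {n : ℕ} (C : Matrix (Fin n) (Fin n) ℝ)
    (S : Finset (Fin n)) (x : Fin n → ℝ) (hx : ∀ r ∉ S, x r = 0) :
    x ⬝ᵥ C.mulVec x =
      (fun r : {i // i ∈ S} => x r.1) ⬝ᵥ
        ((C.submatrix (Subtype.val : {i // i ∈ S} → Fin n) Subtype.val).mulVec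
          (fun r : {i // i ∈ S} => x r.1)) := by
  have inner : ∀ r, (∑ s, C r s * x s) = ∑ s : {i // i ∈ S}, C r s.1 * x s.1 :=
    fun r => (sum_support_subtype S _ (fun s hs => by rw [hx s hs, mul_zero])).symm
  have outer : x ⬝ᵥ C.mulVec x = ∑ r : {i // i ∈ S}, x r.1 * ∑ s, C r.1 s * x s :=
    (sum_support_subtype S (fun r => x r * ∑ s, C r s * x s)
      (fun r hr => by show x r * _ = 0; rw [hx r hr, zero_mul])).symm
  rw [outer]
  show _ = ∑ r : {i // i ∈ S}, x r.1 * ∑ s : {i // i ∈ S}, C r.1 s.1 * x s.1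
  exact Finset.sum_congr rfl fun r _ => by rw [inner r.1]

private lemma diag_le_specNorm {q : ℕ} (C : Matrix (Fin q) (Fin q) ℝ) (c : Fin q) :
    Pi.single c 1 ⬝ᵥ C.mulVec (Pi.single c 1) ≤ specNorm C := by
  have hval : Pi.single c 1 ⬝ᵥ C.mulVec (Pi.single c 1) = C c c := by
    simp [Matrix.mulVec_single_one]
  set e : EuclideanSpace ℝ (Fin q) := EuclideanSpace.single c 1 with he
  have hne : ‖e‖ = 1 := by rw [he, EuclideanSpace.norm_single]; norm_num
  have happ : (Matrix.toEuclideanCLM (𝕜 := ℝ) C) e =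
      (WithLp.equiv 2 (Fin q → ℝ)).symm (C.mulVec (Pi.single c 1)) := by
    have : e = (WithLp.equiv 2 (Fin q → ℝ)).symm (Pi.single c 1) := by
      rw [he, EuclideanSpace.single]; rfl
    rw [this, WithLp.equiv_symm_apply, Matrix.toEuclideanCLM_toLp]
  have hinner : (inner ℝ e ((Matrix.toEuclideanCLM (𝕜 := ℝ) C) e) : ℝ) = C c c := by
    rw [he, EuclideanSpace.inner_single_left, happ]
    simp [Matrix.mulVec_single_one]
  calc Pi.single c 1 ⬝ᵥ C.mulVec (Pi.single c 1) = C c c := hval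
    _ = (inner ℝ e ((Matrix.toEuclideanCLM (𝕜 := ℝ) C) e) : ℝ) := hinner.symm
    _ ≤ ‖e‖ * ‖(Matrix.toEuclideanCLM (𝕜 := ℝ) C) e‖ := real_inner_le_norm _ _
    _ ≤ ‖e‖ * (‖Matrix.toEuclideanCLM (𝕜 := ℝ) C‖ * ‖e‖) := by
        apply mul_le_mul_of_nonneg_left (ContinuousLinearMap.le_opNorm _ _) (norm_nonneg _)
    _ = specNorm C := by rw [hne, specNorm]; ring

end Aux

/-- In the energy-decomposition compression setting, for each column
index `i` and each `k ≥ 0`, every minimizer `ψ_i^k` of `‖x‖_A` over vectors supported in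
`S_k(P_{j_i})` subject to `Φᵀx = e_i` satisfies
`‖ψ_i‖_A ≤ ‖ψ_i^k‖_A ≤ ‖ψ_i^0‖_A ≤ √(δ(P_{j_i}))`, where `ψ_i` is the `i`-th column of
`Ψ = A⁻¹Φ(ΦᵀA⁻¹Φ)⁻¹`. -/
theorem energy_norm_chain_of_local_minimizers {n m M : ℕ}
    (A : Matrix (Fin n) (Fin n) ℝ) (hA : A.PosDef)
    (E : Fin m → Matrix (Fin n) (Fin n) ℝ) (hE : ∀ k, (E k).PosSemidef)
    (hsum : A = ∑ k, E k)
    (P : Fin M → Finset (Fin n)) (hP : IsPartition P)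
    (q : Fin M → ℕ)
    (Φ : (j : Fin M) → Matrix (Fin n) (Fin (q j)) ℝ)
    (hΦsupp : ∀ j r, r ∉ P j → ∀ c, Φ j r c = 0)
    (hΦorth : ∀ j, (Φ j)ᵀ * Φ j = 1)
    (hclosedPD : ∀ j, (((closedEnergy E (P j)).submatrix
        (Subtype.val : {i // i ∈ P j} → Fin n) Subtype.val)).PosDef)
    (Ψ : Matrix (Fin n) ((j : Fin M) × Fin (q j)) ℝ)
    (hΨ : Ψ = A⁻¹ * bigPhi q Φ * ((bigPhi q Φ)ᵀ * A⁻¹ * bigPhi q Φ)⁻¹)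
    (i : (j : Fin M) × Fin (q j)) (k : ℕ)
    (ψik ψi0 : Fin n → ℝ)
    (hψik : IsMinimizerOn A (bigPhi q Φ) (layer E P i.1 k) i ψik)
    (hψi0 : IsMinimizerOn A (bigPhi q Φ) (layer E P i.1 0) i ψi0) :
    normA A (fun r => Ψ r i) ≤ normA A ψik ∧
    normA A ψik ≤ normA A ψi0 ∧
    normA A ψi0 ≤ Real.sqrt (condFactor E (P i.1) (Φ i.1)) := by
  classical
  obtain ⟨j0, c0⟩ := i
  obtain ⟨hPne, hPdisj, hPcover⟩ := hP
  set Φb := bigPhi q Φ with hΦb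
  -- orthonormality of the combined Φ
  have hortho : Φbᵀ * Φb = 1 := by
    ext ⟨j, c⟩ ⟨j', c'⟩
    rw [Matrix.mul_apply]
    by_cases hj : j = j'
    · subst hj
      have hLHS : ∑ r, Φbᵀ ⟨j, c⟩ r * Φb r ⟨j, c'⟩ = ((Φ j)ᵀ * Φ j) c c' := by
        rw [Matrix.mul_apply]; rfl
      rw [hLHS, hΦorth j]
      by_cases hc : c = c' <;> simp [Matrix.one_apply, Sigma.mk.inj_iff, hc]
    · have hz : ∀ r, Φbᵀ ⟨j, c⟩ r * Φb r ⟨j', c'⟩ = 0 := by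
        intro r
        show Φ j r c * Φ j' r c' = 0
        by_cases hr : r ∈ P j
        · rw [hΦsupp j' r (Finset.disjoint_left.mp (hPdisj j j' hj) hr) c', mul_zero]
        · rw [hΦsupp j r hr c, zero_mul]
      have hne : (⟨j, c⟩ : (j : Fin M) × Fin (q j)) ≠ ⟨j', c'⟩ := by
        intro h
        exact hj (congrArg Sigma.fst h)
      rw [Finset.sum_eq_zero (fun r _ => hz r), Matrix.one_apply_ne hne]
  have hAdet : IsUnit A.det := hA.det_pos.ne'.isUnit
  set Bi := Φbᵀ * A⁻¹ * Φb with hBi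
  have hBiPD : Bi.PosDef := posDef_conj A⁻¹ hA.inv Φb (inj_of_orth Φb hortho)
  have hBidet : IsUnit Bi.det := hBiPD.det_pos.ne'.isUnit
  have hΦΨ : Φbᵀ * Ψ = 1 := by
    rw [hΨ, ← Matrix.mul_assoc, ← Matrix.mul_assoc, ← hBi,
      Matrix.mul_nonsing_inv _ hBidet]
  have hAΨ : A * Ψ = Φb * Bi⁻¹ := by
    rw [hΨ, ← Matrix.mul_assoc, ← Matrix.mul_assoc, Matrix.mul_nonsing_inv _ hAdet,
      Matrix.one_mul]
  set ψi : Fin n → ℝ := fun r => Ψ r ⟨j0, c0⟩ with hψidef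
  have hψic : Φbᵀ *ᵥ ψi = Pi.single ⟨j0, c0⟩ 1 := by
    have h1 : Φbᵀ *ᵥ ψi = fun a => (Φbᵀ * Ψ) a ⟨j0, c0⟩ := (col_mul Φbᵀ Ψ ⟨j0, c0⟩).symm
    rw [h1, hΦΨ]
    funext a
    by_cases ha : a = ⟨j0, c0⟩ <;> simp [Matrix.one_apply, Pi.single_apply, ha]
  have hAsymm : Aᵀ = A := (real_conjT A).symm.trans hA.1
  -- global minimality of ψi
  have hglobal : ∀ y : Fin n → ℝ, Φbᵀ *ᵥ y = Pi.single ⟨j0, c0⟩ 1 →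
      ψi ⬝ᵥ A *ᵥ ψi ≤ y ⬝ᵥ A *ᵥ y := by
    intro y hy
    set z := y - ψi with hzdef
    have hzc : Φbᵀ *ᵥ z = 0 := by
      rw [hzdef, Matrix.mulVec_sub, hy, hψic, sub_self]
    have horth : z ⬝ᵥ A *ᵥ ψi = 0 := by
      have hAψ : A *ᵥ ψi = Φb *ᵥ (fun s => Bi⁻¹ s ⟨j0, c0⟩) := by
        have h1 : A *ᵥ ψi = fun r => (A * Ψ) r ⟨j0, c0⟩ := by
          funext r
          rw [Matrix.mul_apply]
          rfl
        rw [h1, hAΨ]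
        exact col_mul Φb Bi⁻¹ ⟨j0, c0⟩
      rw [hAψ, dotProduct_mulVec, ← Matrix.mulVec_transpose, hzc, zero_dotProduct]
    have hexp : y ⬝ᵥ A *ᵥ y = ψi ⬝ᵥ A *ᵥ ψi + 2 * (z ⬝ᵥ A *ᵥ ψi) + z ⬝ᵥ A *ᵥ z := by
      have hyz : y = ψi + z := by rw [hzdef]; abel
      rw [hyz, Matrix.mulVec_add, dotProduct_add, add_dotProduct, add_dotProduct,
        dot_symm A hAsymm ψi z]
      ring
    have hzz := hA.posSemidef.dotProduct_mulVec_nonneg z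
    simp only [star_trivial] at hzz
    rw [hexp, horth]
    linarith
  have ineq1 : ψi ⬝ᵥ A *ᵥ ψi ≤ ψik ⬝ᵥ A *ᵥ ψik := hglobal ψik hψik.2.1
  -- monotonicity of layers
  have hmono : ∀ kk : ℕ, layer E P j0 0 ⊆ layer E P j0 kk := by
    intro kk
    induction kk with
    | zero => exact Finset.Subset.refl _
    | succ k' ih =>
        refine ih.trans ?_
        rw [layer]
        exact Finset.subset_union_left
  have ineq2 : ψik ⬝ᵥ A *ᵥ ψik ≤ ψi0 ⬝ᵥ A *ᵥ ψi0 :=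
    hψik.2.2 ψi0 (fun r hr => hψi0.1 r (fun hmem => hr (hmono k hmem))) hψi0.2.1
  -- the local patch problem
  set S := P j0 with hSdef
  set Φh : Matrix {r // r ∈ S} (Fin (q j0)) ℝ := (Φ j0).submatrix Subtype.val id with hΦh
  set Ab : Matrix {r // r ∈ S} {r // r ∈ S} ℝ :=
    (closedEnergy E S).submatrix Subtype.val Subtype.val with hAb
  have hAbPD : Ab.PosDef := by rw [hAb]; exact hclosedPD j0
  have hAbdet : IsUnit Ab.det := hAbPD.det_pos.ne'.isUnit
  have hΦhortho : Φhᵀ * Φh = 1 := by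
    ext c c'
    have h1 : (Φhᵀ * Φh) c c' = ∑ r : {r // r ∈ S}, Φ j0 r.1 c * Φ j0 r.1 c' := by
      rw [Matrix.mul_apply]; rfl
    have h2 : ((Φ j0)ᵀ * Φ j0) c c' = ∑ r, Φ j0 r c * Φ j0 r c' := by
      rw [Matrix.mul_apply]; rfl
    rw [h1, sum_support_subtype S (fun r => Φ j0 r c * Φ j0 r c')
      (fun r hr => by show Φ j0 r c * Φ j0 r c' = 0; rw [hΦsupp j0 r hr c, zero_mul]),
      ← h2, hΦorth j0]
  set B := Φhᵀ * Ab⁻¹ * Φh with hBdef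
  have hBPD : B.PosDef := posDef_conj Ab⁻¹ hAbPD.inv Φh (inj_of_orth Φh hΦhortho)
  have hBdet : IsUnit B.det := hBPD.det_pos.ne'.isUnit
  set K : Matrix {r // r ∈ S} (Fin (q j0)) ℝ := Ab⁻¹ * (Φh * B⁻¹) with hKdef
  set xh : {r // r ∈ S} → ℝ := K *ᵥ Pi.single c0 1 with hxh
  set x : Fin n → ℝ := fun r => if h : r ∈ S then xh ⟨r, h⟩ else 0 with hxdef
  have hxsupp : ∀ r ∉ S, x r = 0 := fun r hr => dif_neg hr
  have hxsub : (fun r : {i // i ∈ S} => x r.1) = xh := funext fun r => dif_pos r.2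
  have hPhiK : Φhᵀ * K = 1 := by
    rw [hKdef, ← Matrix.mul_assoc, ← Matrix.mul_assoc, ← hBdef,
      Matrix.mul_nonsing_inv _ hBdet]
  have hPhixh : Φhᵀ *ᵥ xh = Pi.single c0 1 := by
    rw [hxh, Matrix.mulVec_mulVec, hPhiK, Matrix.one_mulVec]
  have hxc : Φbᵀ *ᵥ x = Pi.single ⟨j0, c0⟩ 1 := by
    funext a
    rcases a with ⟨j', c'⟩
    show ∑ r, Φ j' r c' * x r = _
    by_cases hj : j' = j0
    · subst hj
      have hmain : ∑ r, Φ j' r c' * x r = ∑ r : {r // r ∈ S}, Φ j' r.1 c' * xh r := by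
        rw [← sum_support_subtype S (fun r => Φ j' r c' * x r)
          (fun r hr => by show Φ j' r c' * x r = 0; rw [hxsupp r hr, mul_zero])]
        apply Finset.sum_congr rfl; intro r _
        show Φ j' r.1 c' * x r.1 = Φ j' r.1 c' * xh r
        rw [show x r.1 = xh r from congrFun hxsub r]
      rw [hmain, show (∑ r : {r // r ∈ S}, Φ j' r.1 c' * xh r) = (Φhᵀ *ᵥ xh) c' from rfl,
        hPhixh]
      by_cases hc : c' = c0 <;> simp [Pi.single_apply, Sigma.mk.inj_iff, hc]
    · have hz : ∀ r, Φ j' r c' * x r = 0 := by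
        intro r
        by_cases hr : r ∈ S
        · rw [hΦsupp j' r
            (Finset.disjoint_left.mp (hPdisj j0 j' (fun h => hj h.symm)) hr) c', zero_mul]
        · rw [hxsupp r hr, mul_zero]
      have hne : (⟨j', c'⟩ : (j : Fin M) × Fin (q j)) ≠ ⟨j0, c0⟩ := by
        intro h
        exact hj (congrArg Sigma.fst h)
      rw [Finset.sum_eq_zero (fun r _ => hz r)]
      simp [Pi.single_apply, hne]
  -- energy bound for the candidate x
  have hchain : x ⬝ᵥ A *ᵥ x ≤ condFactor E S (Φ j0) := by
    have h1 : x ⬝ᵥ A *ᵥ x ≤ x ⬝ᵥ (closedEnergy E S) *ᵥ x := by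
      rw [hsum]
      exact quadform_le_closedEnergy E hE S x hxsupp
    have h2 : x ⬝ᵥ (closedEnergy E S) *ᵥ x = xh ⬝ᵥ Ab *ᵥ xh := by
      rw [quadform_submatrix (closedEnergy E S) S x hxsupp, hxsub, ← hAb]
    have h3 : xh ⬝ᵥ Ab *ᵥ xh = Pi.single c0 1 ⬝ᵥ B⁻¹ *ᵥ Pi.single c0 1 := by
      have hAbK : Ab *ᵥ xh = (Φh * B⁻¹) *ᵥ (Pi.single c0 1) := by
        rw [hxh, Matrix.mulVec_mulVec, hKdef, ← Matrix.mul_assoc,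
          Matrix.mul_nonsing_inv _ hAbdet, Matrix.one_mul]
      rw [hAbK, ← Matrix.mulVec_mulVec, dotProduct_mulVec, ← Matrix.mulVec_transpose,
        hPhixh]
    have h4 : Pi.single c0 1 ⬝ᵥ B⁻¹ *ᵥ Pi.single c0 1 ≤ specNorm B⁻¹ :=
      diag_le_specNorm B⁻¹ c0
    have h5 : specNorm B⁻¹ = condFactor E S (Φ j0) := by
      simp only [condFactor]; rfl
    calc x ⬝ᵥ A *ᵥ x ≤ x ⬝ᵥ (closedEnergy E S) *ᵥ x := h1
      _ = xh ⬝ᵥ Ab *ᵥ xh := h2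
      _ = Pi.single c0 1 ⬝ᵥ B⁻¹ *ᵥ Pi.single c0 1 := h3
      _ ≤ specNorm B⁻¹ := h4
      _ = condFactor E S (Φ j0) := h5
  have ineq3 : ψi0 ⬝ᵥ A *ᵥ ψi0 ≤ condFactor E S (Φ j0) := by
    refine le_trans (hψi0.2.2 x ?_ hxc) hchain
    · intro r hr
      exact hxsupp r hr
  exact ⟨Real.sqrt_le_sqrt ineq1, Real.sqrt_le_sqrt ineq2, Real.sqrt_le_sqrt ineq3⟩
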